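/- arXiv:1511.05706 — 5 statements merged into one kernel-verified Lean document; each statement's English description precedes it below -/
import Mathlib

section
/- Let f(x) = Σ_{m≥0} a_m x^m be a real power series with all coefficients a_m ≥ 0 and infinite radius of convergence. If A ∈ ℝ^{T×T} is symmetric positive semidefinite, then the matrix f[A] obtained by applying f entrywise, (f[A])_{rs} = f(A_{rs}), is positive semidefinite. -/
open Matrix

lemma schur_product_psd {T : ℕ} (B C : Matrix (Fin T) (Fin T) ℝ)
    (hB : B.PosSemidef) (hC : C.PosSemidef) :
    (Matrix.of fun r s => B r s * C r s).PosSemidef := by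
  obtain ⟨_, D, hD⟩ := Matrix.posSemidef_iff_eq_sum_vecMulVec.mp hB
  have hBrs : ∀ r s, B r s = ∑ k, D k r * D k s := by
    intro r s
    rw [hD]
    simp [Matrix.sum_apply, vecMulVec_apply]
  refine Matrix.PosSemidef.of_dotProduct_mulVec_nonneg ?_ ?_
  · ext r s
    simp only [conjTranspose_apply, of_apply, star_trivial]
    rw [← hB.1.apply r s, ← hC.1.apply r s]
    simp
  · intro x
    have key : dotProduct (star x) ((Matrix.of fun r s => B r s * C r s) *ᵥ x)
        = ∑ k, dotProduct (star fun r => D k r * x r)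
            (C *ᵥ (fun r => D k r * x r)) := by
      simp only [dotProduct, mulVec, star_trivial, Pi.star_apply, of_apply]
      calc ∑ r, x r * ∑ s, (B r s * C r s) * x s
          = ∑ r, ∑ s, ∑ k, (D k r * x r) * (C r s * (D k s * x s)) := by
            refine Finset.sum_congr rfl fun r _ => ?_
            rw [Finset.mul_sum]
            refine Finset.sum_congr rfl fun s _ => ?_
            rw [hBrs r s, Finset.sum_mul, Finset.sum_mul, Finset.mul_sum]
            exact Finset.sum_congr rfl fun k _ => by ring
        _ = ∑ k, ∑ r, ∑ s, (D k r * x r) * (C r s * (D k s * x s)) := by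
            rw [show (∑ r, ∑ s, ∑ k, (D k r * x r) * (C r s * (D k s * x s)))
                = ∑ r, ∑ k, ∑ s, (D k r * x r) * (C r s * (D k s * x s)) from
              Finset.sum_congr rfl fun r _ => Finset.sum_comm, Finset.sum_comm]
        _ = ∑ k, ∑ r, (D k r * x r) * ∑ s, C r s * (D k s * x s) := by
            simp [Finset.mul_sum]
    rw [key]
    exact Finset.sum_nonneg fun k _ => hC.dotProduct_mulVec_nonneg _

lemma pow_entrywise_psd {T : ℕ} (A : Matrix (Fin T) (Fin T) ℝ) (hA : A.PosSemidef) (m : ℕ) :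
    (Matrix.of fun r s => A r s ^ m).PosSemidef := by
  induction m with
  | zero =>
    refine Matrix.PosSemidef.of_dotProduct_mulVec_nonneg ?_ ?_
    · ext r s; simp
    · intro x
      have : dotProduct (star x) ((Matrix.of fun r s : Fin T => A r s ^ 0) *ᵥ x)
          = (∑ r, x r) * (∑ r, x r) := by
        simp only [dotProduct, mulVec, star_trivial, Pi.star_apply, of_apply, pow_zero,
          one_mul, Finset.mul_sum, Finset.sum_mul]
        exact Finset.sum_congr rfl fun r _ => Finset.sum_congr rfl fun s _ => mul_comm _ _
      rw [this]
      exact mul_self_nonneg _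
  | succ m ih =>
    have := schur_product_psd A (Matrix.of fun r s => A r s ^ m) hA ih
    convert this using 2
    ext r s
    simp [pow_succ, mul_comm]

theorem entrywise_power_series_posSemidef (T : ℕ) (a : ℕ → ℝ)
    (ha : ∀ m, 0 ≤ a m)
    (hconv : ∀ x : ℝ, Summable fun m => a m * x ^ m)
    (A : Matrix (Fin T) (Fin T) ℝ) (hA : A.PosSemidef) :
    (Matrix.of fun r s => ∑' m : ℕ, a m * A r s ^ m).PosSemidef := by
  have hsym : ∀ r s, A s r = A r s := fun r s => by
    have := hA.1.apply r s; simpa using this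
  refine Matrix.PosSemidef.of_dotProduct_mulVec_nonneg ?_ ?_
  · ext r s
    simp only [conjTranspose_apply, of_apply, star_trivial, hsym]
  · intro x
    have hsum : ∀ r s : Fin T, Summable fun m => x r * (a m * A r s ^ m * x s) :=
      fun r s => (((hconv (A r s)).mul_right (x s)).mul_left (x r))
    have key : dotProduct (star x) ((Matrix.of fun r s => ∑' m : ℕ, a m * A r s ^ m) *ᵥ x)
        = ∑' m : ℕ, ∑ r, ∑ s, x r * (a m * A r s ^ m * x s) := by
      simp only [dotProduct, mulVec, star_trivial, Pi.star_apply, of_apply]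
      rw [Summable.tsum_finsetSum (fun r _ => summable_sum fun s _ => hsum r s)]
      refine Finset.sum_congr rfl fun r _ => ?_
      rw [Summable.tsum_finsetSum (fun s _ => hsum r s), Finset.mul_sum]
      refine Finset.sum_congr rfl fun s _ => ?_
      rw [← tsum_mul_right, ← tsum_mul_left]
    rw [key]
    refine tsum_nonneg fun m => ?_
    have h1 : ∑ r, ∑ s, x r * (a m * A r s ^ m * x s)
        = a m * dotProduct (star x) ((Matrix.of fun r s => A r s ^ m) *ᵥ x) := by
      simp only [dotProduct, mulVec, star_trivial, Pi.star_apply, of_apply, Finset.mul_sum]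
      exact Finset.sum_congr rfl fun r _ => Finset.sum_congr rfl fun s _ => by ring
    rw [h1]
    exact mul_nonneg (ha m) ((pow_entrywise_psd A hA m).dotProduct_mulVec_nonneg x)
end

section
/- Let ρ ∈ ℝ^{T×T} be symmetric positive semidefinite, k ∈ ℕ, k ≥ 1, and p = 2k/(2k−1). Then the maximum of Σ_{r,s} Θ_{rs} ρ_{rs} − (1/2) Σ_{r,s} |Θ_{rs}|^p over the cone of symmetric positive semidefinite matrices Θ equals its maximum over all of ℝ^{T×T}, namely (1/(4k−2)) ((2k−1)/k)^{2k} Σ_{r,s} ρ_{rs}^{2k}, and the maximizer Θ*_{rs} = ((2k−1)/k)^{2k−1} ρ_{rs}^{2k−1} is positive semidefinite. -/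
open Matrix Finset

private lemma entrymul_psd {T : ℕ} {A B : Matrix (Fin T) (Fin T) ℝ}
    (hA : A.PosSemidef) (hB : B.PosSemidef) :
    Matrix.PosSemidef (Matrix.of fun r s => A r s * B r s) := by
  refine Matrix.PosSemidef.of_dotProduct_mulVec_nonneg ?_ ?_
  · ext r s
    simp only [conjTranspose_apply, Matrix.of_apply, star_trivial]
    rw [← hA.1.apply r s, ← hB.1.apply r s, star_trivial, star_trivial]
  · intro x
    obtain ⟨C, hCdef⟩ : ∃ C : Matrix (Fin T) (Fin T) ℝ, B = star C * C := by
      open scoped MatrixOrder in exact CStarAlgebra.nonneg_iff_eq_star_mul_self.mp hB.nonneg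
    have hBC : ∀ r s, B r s = ∑ j, C j r * C j s := by
      intro r s
      rw [hCdef, Matrix.mul_apply]
      simp [Matrix.star_apply]
    have key : star x ⬝ᵥ ((Matrix.of fun r s => A r s * B r s) *ᵥ x)
        = ∑ j, star (fun r => x r * C j r) ⬝ᵥ (A *ᵥ fun r => x r * C j r) := by
      simp only [dotProduct, mulVec, Matrix.of_apply, Pi.star_apply, star_trivial]
      calc ∑ r, x r * ∑ s, (A r s * B r s) * x s
          = ∑ r, ∑ s, ∑ j, (x r * C j r) * (A r s * (x s * C j s)) := by
            refine Finset.sum_congr rfl fun r _ => ?_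
            rw [Finset.mul_sum]
            refine Finset.sum_congr rfl fun s _ => ?_
            rw [hBC r s, Finset.mul_sum, Finset.sum_mul, Finset.mul_sum]
            refine Finset.sum_congr rfl fun j _ => ?_
            ring
        _ = ∑ r, ∑ j, ∑ s, (x r * C j r) * (A r s * (x s * C j s)) :=
            Finset.sum_congr rfl fun r _ => Finset.sum_comm
        _ = ∑ j, ∑ r, ∑ s, (x r * C j r) * (A r s * (x s * C j s)) :=
            Finset.sum_comm
        _ = ∑ j, ∑ r, x r * C j r * ∑ s, A r s * (x s * C j s) := by
            refine Finset.sum_congr rfl fun j _ => Finset.sum_congr rfl fun r _ => ?_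
            rw [Finset.mul_sum]
    rw [key]
    exact Finset.sum_nonneg fun j _ => hA.dotProduct_mulVec_nonneg _

private lemma pow_entry_psd {T : ℕ} {ρ : Matrix (Fin T) (Fin T) ℝ} (hρ : ρ.PosSemidef) :
    ∀ n : ℕ, Matrix.PosSemidef (Matrix.of fun r s => ρ r s ^ n)
  | 0 => by
      refine Matrix.PosSemidef.of_dotProduct_mulVec_nonneg ?_ ?_
      · ext r s
        simp [conjTranspose_apply]
      · intro x
        simp only [dotProduct, mulVec, Matrix.of_apply, Pi.star_apply, star_trivial,
          pow_zero, one_mul]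
        have : ∑ r : Fin T, x r * ∑ s : Fin T, x s = (∑ r : Fin T, x r) ^ 2 := by
          rw [← Finset.sum_mul]; ring
        rw [this]
        positivity
  | (n + 1) => by
      have h := entrymul_psd (pow_entry_psd hρ n) hρ
      have h2 : (Matrix.of fun r s => (Matrix.of fun r s => ρ r s ^ n) r s * ρ r s)
          = Matrix.of fun r s => ρ r s ^ (n + 1) := by
        ext r s; simp [pow_succ]
      rwa [h2] at h

private lemma scalar_bound (k : ℕ) (hk : 1 ≤ k) (x a : ℝ) :
    x * a - 1 / 2 * |x| ^ ((2 * k : ℝ) / (2 * k - 1)) ≤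
      1 / (4 * (k : ℝ) - 2) * ((2 * k - 1 : ℝ) / k) ^ (2 * k) * a ^ (2 * k) := by
  have hK : (1 : ℝ) ≤ k := by exact_mod_cast hk
  have hK0 : (0 : ℝ) < k := by linarith
  have h1 : (0 : ℝ) < 2 * (k : ℝ) - 1 := by linarith
  have h2 : (0 : ℝ) < 2 * (k : ℝ) := by linarith
  obtain ⟨c, hcdef⟩ : ∃ c : ℝ, c = (2 * (k : ℝ) - 1) / k := ⟨_, rfl⟩
  obtain ⟨P, hPdef⟩ : ∃ P : ℝ, P = (2 * (k : ℝ)) / (2 * (k : ℝ) - 1) := ⟨_, rfl⟩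
  rw [show (2 * (k : ℝ) - 1) / (k : ℝ) = c from hcdef.symm,
      show (2 * (k : ℝ)) / (2 * (k : ℝ) - 1) = P from hPdef.symm]
  have hc : 0 < c := hcdef ▸ div_pos h1 hK0
  have hP1 : 1 < P := by rw [hPdef, lt_div_iff₀ h1]; linarith
  have hpq : P.HolderConjugate (2 * (k : ℝ)) := by
    refine Real.holderConjugate_iff.mpr ⟨hP1, ?_⟩
    rw [hPdef, inv_div, inv_eq_one_div, ← add_div,
      show 2 * (k : ℝ) - 1 + 1 = 2 * (k : ℝ) by ring, div_self h2.ne']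
  obtain ⟨μ, hμdef⟩ : ∃ μ : ℝ, μ = c ^ ((2 * (k : ℝ) - 1) / (2 * k)) := ⟨_, rfl⟩
  have hμ : 0 < μ := hμdef ▸ Real.rpow_pos_of_pos hc _
  have hY := Real.young_inequality_of_nonneg
    (div_nonneg (abs_nonneg x) hμ.le) (mul_nonneg hμ.le (abs_nonneg a)) hpq
  have hμP : μ ^ P = c := by
    rw [hμdef, ← Real.rpow_mul hc.le]
    rw [show (2 * (k : ℝ) - 1) / (2 * k) * P = 1 by
      rw [hPdef, div_mul_div_comm, mul_comm (2 * (k : ℝ)) (2 * (k : ℝ) - 1)]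
      exact div_self (mul_pos h1 h2).ne']
    exact Real.rpow_one c
  have hμQ : μ ^ (2 * (k : ℝ)) = c ^ (2 * k) / c := by
    rw [hμdef, ← Real.rpow_mul hc.le]
    rw [show (2 * (k : ℝ) - 1) / (2 * k) * (2 * (k : ℝ)) = 2 * (k : ℝ) - 1 from
      div_mul_cancel₀ _ h2.ne']
    rw [show (2 * (k : ℝ) - 1) = ((2 * k : ℕ) : ℝ) - 1 by push_cast; ring,
      Real.rpow_sub hc, Real.rpow_one, Real.rpow_natCast]
  have e1 : (|x| / μ) ^ P = |x| ^ P / c := by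
    rw [Real.div_rpow (abs_nonneg x) hμ.le, hμP]
  have e2 : (μ * |a|) ^ (2 * (k : ℝ)) = c ^ (2 * k) / c * a ^ (2 * k) := by
    rw [Real.mul_rpow hμ.le (abs_nonneg a), hμQ]
    congr 1
    rw [show (2 * (k : ℝ)) = ((2 * k : ℕ) : ℝ) by push_cast; ring, Real.rpow_natCast,
      pow_mul, sq_abs, ← pow_mul]
  have e3 : |x| / μ * (μ * |a|) = |x| * |a| := by
    field_simp
  rw [e1, e2, e3] at hY
  have hxa : x * a ≤ |x| * |a| := by rw [← abs_mul]; exact le_abs_self _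
  have hcP : c * P = 2 := by
    rw [hcdef, hPdef, div_mul_div_comm, div_eq_iff (mul_ne_zero hK0.ne' h1.ne')]
    ring
  have hf1 : |x| ^ P / c / P = 1 / 2 * |x| ^ P := by
    rw [div_div, hcP]; ring
  have hf2 : c ^ (2 * k) / c * a ^ (2 * k) / (2 * (k : ℝ))
      = 1 / (4 * (k : ℝ) - 2) * c ^ (2 * k) * a ^ (2 * k) := by
    have hcq : c * (2 * (k : ℝ)) = 4 * (k : ℝ) - 2 := by
      rw [hcdef, div_mul_eq_mul_div, div_eq_iff hK0.ne']
      ring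
    rw [div_mul_eq_mul_div, div_div, hcq]
    ring
  rw [hf1, hf2] at hY
  linarith

private lemma scalar_eq (k : ℕ) (hk : 1 ≤ k) (a : ℝ) :
    ((2 * (k : ℝ) - 1) / k) ^ (2 * k - 1) * a ^ (2 * k - 1) * a
      - 1 / 2 * |((2 * (k : ℝ) - 1) / k) ^ (2 * k - 1) * a ^ (2 * k - 1)|
          ^ ((2 * k : ℝ) / (2 * k - 1))
    = 1 / (4 * (k : ℝ) - 2) * ((2 * (k : ℝ) - 1) / k) ^ (2 * k) * a ^ (2 * k) := by
  have hK : (1 : ℝ) ≤ k := by exact_mod_cast hk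
  have hK0 : (0 : ℝ) < k := by linarith
  have h1 : (0 : ℝ) < 2 * k - 1 := by linarith
  set c : ℝ := (2 * (k : ℝ) - 1) / k with hcdef
  have hc : 0 < c := div_pos h1 hK0
  set m : ℕ := 2 * k - 1 with hmdef
  have hm : m + 1 = 2 * k := by omega
  have hmc : (m : ℝ) = 2 * (k : ℝ) - 1 := by
    rw [hmdef, Nat.cast_sub (by omega : 1 ≤ 2 * k)]; push_cast; ring
  have habs : |c ^ m * a ^ m| = (c * |a|) ^ m := by
    rw [abs_mul, abs_pow, abs_pow, abs_of_pos hc, mul_pow]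
  have hrpow : |c ^ m * a ^ m| ^ ((2 * k : ℝ) / (2 * k - 1)) = c ^ (2 * k) * a ^ (2 * k) := by
    rw [habs, ← Real.rpow_natCast (c * |a|) m, ← Real.rpow_mul (by positivity)]
    rw [show (m : ℝ) * ((2 * k : ℝ) / (2 * k - 1)) = ((2 * k : ℕ) : ℝ) by
      rw [hmc, show ((2 * k : ℕ) : ℝ) = 2 * (k : ℝ) by push_cast; ring, mul_comm,
        div_mul_cancel₀ _ h1.ne']]
    rw [Real.rpow_natCast, mul_pow]
    congr 1
    rw [pow_mul, sq_abs, ← pow_mul]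
  rw [hrpow, mul_assoc, ← pow_succ, hm]
  have hpow : c ^ (2 * k) = c ^ m * c := by rw [← hm, pow_succ]
  rw [hpow]
  have h4 : (0 : ℝ) < 4 * (k : ℝ) - 2 := by linarith
  have h3 : (1 : ℝ) - c / 2 = 1 / (4 * (k : ℝ) - 2) * c := by
    rw [hcdef]
    rw [one_div_mul_eq_div, eq_div_iff h4.ne']
    field_simp
    ring
  linear_combination (c ^ m * a ^ (2 * k)) * h3

theorem pnorm_regularizer_psd_constraint_dropped (T : ℕ) (k : ℕ) (hk : 1 ≤ k)
    (ρ : Matrix (Fin T) (Fin T) ℝ) (hρ : ρ.PosSemidef)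
    (p : ℝ) (hp : p = (2 * k : ℝ) / (2 * k - 1))
    (g : Matrix (Fin T) (Fin T) ℝ → ℝ)
    (hg : ∀ Θ, g Θ = (∑ r, ∑ s, Θ r s * ρ r s) - (1 / 2) * ∑ r, ∑ s, |Θ r s| ^ p)
    (Θstar : Matrix (Fin T) (Fin T) ℝ)
    (hΘstar : ∀ r s, Θstar r s = ((2 * k - 1 : ℝ) / k) ^ (2 * k - 1) * ρ r s ^ (2 * k - 1))
    (val : ℝ)
    (hval : val = (1 / (4 * (k : ℝ) - 2)) * ((2 * k - 1 : ℝ) / k) ^ (2 * k) *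
      ∑ r, ∑ s, ρ r s ^ (2 * k)) :
    Θstar.PosSemidef ∧
    IsGreatest (g '' {Θ | Θ.PosSemidef}) val ∧
    IsGreatest (Set.range g) val ∧
    g Θstar = val := by
  have hK : (1 : ℝ) ≤ k := by exact_mod_cast hk
  have hK0 : (0 : ℝ) < k := by linarith
  have h1 : (0 : ℝ) < 2 * k - 1 := by linarith
  -- expansion of g as a single double sum
  have expand : ∀ Θ : Matrix (Fin T) (Fin T) ℝ,
      g Θ = ∑ r, ∑ s, (Θ r s * ρ r s - 1 / 2 * |Θ r s| ^ p) := by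
    intro Θ
    rw [hg, Finset.mul_sum, ← Finset.sum_sub_distrib]
    exact Finset.sum_congr rfl fun r _ => by rw [Finset.mul_sum, ← Finset.sum_sub_distrib]
  have expandv : val = ∑ r, ∑ s,
      1 / (4 * (k : ℝ) - 2) * ((2 * k - 1 : ℝ) / k) ^ (2 * k) * ρ r s ^ (2 * k) := by
    rw [hval, Finset.mul_sum]
    exact Finset.sum_congr rfl fun r _ => by rw [Finset.mul_sum]
  -- the maximum is attained at Θstar
  have hgs : g Θstar = val := by
    rw [expand, expandv]
    refine Finset.sum_congr rfl fun r _ => Finset.sum_congr rfl fun s _ => ?_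
    rw [hΘstar, hp]
    exact scalar_eq k hk (ρ r s)
  -- upper bound over all matrices
  have hub : ∀ Θ : Matrix (Fin T) (Fin T) ℝ, g Θ ≤ val := by
    intro Θ
    rw [expand, expandv]
    refine Finset.sum_le_sum fun r _ => Finset.sum_le_sum fun s _ => ?_
    rw [hp]
    exact scalar_bound k hk (Θ r s) (ρ r s)
  -- Θstar is positive semidefinite
  have hM := pow_entry_psd hρ (2 * k - 1)
  have hc0 : (0 : ℝ) ≤ ((2 * (k : ℝ) - 1) / k) ^ (2 * k - 1) :=
    pow_nonneg (div_nonneg h1.le hK0.le) _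
  have hpsd : Θstar.PosSemidef := by
    refine Matrix.PosSemidef.of_dotProduct_mulVec_nonneg ?_ ?_
    · ext r s
      simp only [conjTranspose_apply, star_trivial, hΘstar]
      rw [show ρ s r = ρ r s from by rw [← hρ.1.apply r s, star_trivial]]
    · intro x
      have hq := hM.dotProduct_mulVec_nonneg x
      have heq : star x ⬝ᵥ (Θstar *ᵥ x)
          = ((2 * (k : ℝ) - 1) / k) ^ (2 * k - 1) *
            (star x ⬝ᵥ ((Matrix.of fun r s => ρ r s ^ (2 * k - 1)) *ᵥ x)) := by
        simp only [dotProduct, mulVec, Matrix.of_apply, Pi.star_apply, star_trivial,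
          Finset.mul_sum]
        refine Finset.sum_congr rfl fun r _ => ?_
        refine Finset.sum_congr rfl fun s _ => ?_
        rw [hΘstar]
        ring
      rw [heq]
      exact mul_nonneg hc0 hq
  refine ⟨hpsd, ⟨⟨Θstar, hpsd, hgs⟩, ?_⟩, ⟨⟨Θstar, hgs⟩, ?_⟩, hgs⟩
  · rintro v ⟨Θ, -, rfl⟩; exact hub Θ
  · rintro v ⟨Θ, rfl⟩; exact hub Θ
end

section
/- Let K ∈ ℝ^{n×n} be symmetric positive semidefinite. The function f: S^T_+ × ℝ^{n×T} → ℝ ∪ {+∞} defined by f(Θ, β) = Σ_{r,s=1}^T Σ_{i,j=1}^n (Θ†)_{sr} β_{is} β_{jr} K_{ij} when every row β_{i·} lies in the range of Θ, and f(Θ, β) = +∞ otherwise, is jointly convex in (Θ, β). -/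
open Matrix Finset

private lemma psd_smul' {m : ℕ} {A : Matrix (Fin m) (Fin m) ℝ} (hA : A.PosSemidef)
    {a : ℝ} (ha : 0 ≤ a) : (a • A).PosSemidef := by
  refine ⟨?_, fun x => ?_⟩
  · have := hA.1
    simp only [Matrix.IsHermitian, conjTranspose_smul] at this ⊢
    rw [this]; simp
  · have h2 := hA.2 x
    exact (hA.smul ha).2 x

private lemma trace_NNt_nonneg {p q : ℕ} (N : Matrix (Fin p) (Fin q) ℝ) :
    0 ≤ trace (N * Nᵀ) := by
  simp only [Matrix.trace, Matrix.diag, Matrix.mul_apply, Matrix.transpose_apply]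
  exact Finset.sum_nonneg fun i _ => Finset.sum_nonneg fun j _ => mul_self_nonneg _

private lemma trace_psd_nonneg {TT nn : ℕ} {K : Matrix (Fin nn) (Fin nn) ℝ} (hK : K.PosSemidef)
    {Θ : Matrix (Fin TT) (Fin TT) ℝ} (hΘ : Θ.PosSemidef) (W : Matrix (Fin nn) (Fin TT) ℝ) :
    0 ≤ trace (K * (W * (Θ * Wᵀ))) := by
  obtain ⟨B, hB⟩ : ∃ B : Matrix (Fin nn) (Fin nn) ℝ, K = Bᴴ * B := by
    open scoped MatrixOrder in
    obtain ⟨B, hB⟩ := CStarAlgebra.nonneg_iff_eq_star_mul_self.mp hK.nonneg; exact ⟨B, hB⟩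
  obtain ⟨C, hC⟩ : ∃ C : Matrix (Fin TT) (Fin TT) ℝ, Θ = Cᴴ * C := by
    open scoped MatrixOrder in
    obtain ⟨C, hC⟩ := CStarAlgebra.nonneg_iff_eq_star_mul_self.mp hΘ.nonneg; exact ⟨C, hC⟩
  rw [conjTranspose_eq_transpose_of_trivial] at hB hC
  have h1 : K * (W * (Θ * Wᵀ)) = Bᵀ * (B * W * Cᵀ * (C * Wᵀ)) := by
    rw [hB, hC]; simp only [Matrix.mul_assoc]
  rw [h1, trace_mul_comm]
  have h2 : B * W * Cᵀ * (C * Wᵀ) * Bᵀ = (B * W * Cᵀ) * (B * W * Cᵀ)ᵀ := by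
    simp only [Matrix.transpose_mul, Matrix.transpose_transpose, Matrix.mul_assoc]
  rw [h2]
  exact trace_NNt_nonneg _

private lemma sum_eq_trace {TT nn : ℕ} (P : Matrix (Fin TT) (Fin TT) ℝ)
    (β : Matrix (Fin nn) (Fin TT) ℝ) (K : Matrix (Fin nn) (Fin nn) ℝ) (hK : Kᵀ = K) :
    (∑ r, ∑ s, ∑ i, ∑ j, P s r * β i s * β j r * K i j) = trace (K * (β * (P * βᵀ))) := by
  have hcyc : trace (K * (β * (P * βᵀ))) = trace (P * (βᵀ * (K * β))) := by
    have : K * (β * (P * βᵀ)) = K * β * P * βᵀ := by simp only [Matrix.mul_assoc]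
    rw [this, trace_mul_comm (K * β * P) βᵀ, ← Matrix.mul_assoc,
      trace_mul_comm (βᵀ * (K * β)) P]
  have htr : trace (P * (βᵀ * (K * β))) = ∑ s, ∑ r, P s r * (βᵀ * (K * β)) r s := by
    simp [Matrix.trace, Matrix.diag, Matrix.mul_apply]
  have hM : ∀ r s, (βᵀ * (K * β)) r s = ∑ i, ∑ j, β i r * (K i j * β j s) := by
    intro r s
    simp [Matrix.mul_apply, Matrix.transpose_apply, Finset.mul_sum]
  rw [hcyc, htr]
  rw [Finset.sum_comm]
  refine Finset.sum_congr rfl fun s _ => Finset.sum_congr rfl fun r _ => ?_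
  rw [hM r s, Finset.mul_sum]
  rw [Finset.sum_comm]
  refine Finset.sum_congr rfl fun i _ => ?_
  rw [Finset.mul_sum]
  refine Finset.sum_congr rfl fun j _ => ?_
  have hKji : K j i = K i j := (congrFun (congrFun hK j) i).symm
  rw [hKji]; ring

private lemma range_lemma {TT : ℕ} {Θ₁ Θ₂ Θ P : Matrix (Fin TT) (Fin TT) ℝ}
    (h1 : Θ₁.PosSemidef) (h2 : Θ₂.PosSemidef) {a b : ℝ} (ha : 0 < a) (hb : 0 ≤ b)
    (hΘ : Θ = a • Θ₁ + b • Θ₂)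
    (hP1 : Θ * P * Θ = Θ) (hP3 : (Θ * P)ᵀ = Θ * P)
    {x : Fin TT → ℝ} (hx : x ∈ Set.range Θ₁.mulVec) : x ∈ Set.range Θ.mulVec := by
  obtain ⟨z, hz⟩ := hx
  have hΘpsd : Θ.PosSemidef := hΘ ▸ (psd_smul' h1 ha.le).add (psd_smul' h2 hb)
  have hΘsym : Θᵀ = Θ := by
    rw [← conjTranspose_eq_transpose_of_trivial]; exact hΘpsd.1
  have h1sym : Θ₁ᵀ = Θ₁ := by
    rw [← conjTranspose_eq_transpose_of_trivial]; exact h1.1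
  have hΘΘP : Θ * Θ * P = Θ := by
    have h := Matrix.transpose_mul (Θ * P) Θ
    rw [hP1, hP3, hΘsym, ← Matrix.mul_assoc] at h
    exact h.symm
  set w : Fin TT → ℝ := x - Θ.mulVec (P.mulVec x) with hw
  have hw0 : Θ.mulVec w = 0 := by
    rw [hw, Matrix.mulVec_sub, Matrix.mulVec_mulVec, Matrix.mulVec_mulVec, hΘΘP, sub_self]
  have hq : w ⬝ᵥ Θ.mulVec w = 0 := by rw [hw0, dotProduct_zero]
  have hsplit : a * (w ⬝ᵥ Θ₁.mulVec w) + b * (w ⬝ᵥ Θ₂.mulVec w) = 0 := by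
    rw [← hq, hΘ]
    simp [Matrix.add_mulVec, smul_mulVec, dotProduct_add, dotProduct_smul]
  have n1 : 0 ≤ w ⬝ᵥ Θ₁.mulVec w := by simpa using h1.dotProduct_mulVec_nonneg w
  have n2 : 0 ≤ w ⬝ᵥ Θ₂.mulVec w := by simpa using h2.dotProduct_mulVec_nonneg w
  have hquad : w ⬝ᵥ Θ₁.mulVec w = 0 := by nlinarith
  have h1w : Θ₁.mulVec w = 0 :=
    (h1.dotProduct_mulVec_zero_iff w).mp (by simpa using hquad)
  have hxw : x ⬝ᵥ w = 0 := by
    rw [← hz, dotProduct_comm, dotProduct_mulVec, ← Matrix.mulVec_transpose, h1sym, h1w,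
      zero_dotProduct]
  have hPxw : Θ.mulVec (P.mulVec x) ⬝ᵥ w = 0 := by
    rw [dotProduct_comm, dotProduct_mulVec, ← Matrix.mulVec_transpose, hΘsym, hw0,
      zero_dotProduct]
  have hww : w ⬝ᵥ w = 0 := by
    rw [hw, sub_dotProduct, ← hw, hxw, hPxw, sub_zero]
  have hwz : w = 0 := dotProduct_self_eq_zero.mp hww
  exact ⟨P.mulVec x, (sub_eq_zero.mp (hw ▸ hwz)).symm⟩

private lemma trace_cross {TT nn : ℕ} {K : Matrix (Fin nn) (Fin nn) ℝ} (hK : Kᵀ = K)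
    {Θ : Matrix (Fin TT) (Fin TT) ℝ} (hΘ : Θᵀ = Θ) (U V : Matrix (Fin nn) (Fin TT) ℝ) :
    trace (K * (U * (Θ * Vᵀ))) = trace (K * (V * (Θ * Uᵀ))) := by
  have h1 : (K * (U * (Θ * Vᵀ)))ᵀ = V * (Θ * (Uᵀ * K)) := by
    simp only [Matrix.transpose_mul, Matrix.transpose_transpose, hK, hΘ, Matrix.mul_assoc]
  rw [← trace_transpose (K * (U * (Θ * Vᵀ))), h1]
  have h2 : V * (Θ * (Uᵀ * K)) = V * (Θ * Uᵀ) * K := by simp only [Matrix.mul_assoc]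
  rw [h2, trace_mul_comm, ← Matrix.mul_assoc]

theorem joint_convexity_output_kernel_quadratic (T n : ℕ)
    (K : Matrix (Fin n) (Fin n) ℝ) (hK : K.PosSemidef)
    (pinv : Matrix (Fin T) (Fin T) ℝ → Matrix (Fin T) (Fin T) ℝ)
    (hpinv : ∀ A : Matrix (Fin T) (Fin T) ℝ,
      A * pinv A * A = A ∧ pinv A * A * pinv A = pinv A ∧
      (A * pinv A)ᵀ = A * pinv A ∧ (pinv A * A)ᵀ = pinv A * A)
    (D : Set (Matrix (Fin T) (Fin T) ℝ × Matrix (Fin n) (Fin T) ℝ))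
    (hD : D = {p | p.1.PosSemidef ∧ ∀ i : Fin n, (fun s => p.2 i s) ∈ Set.range p.1.mulVec})
    (f : Matrix (Fin T) (Fin T) ℝ × Matrix (Fin n) (Fin T) ℝ → ℝ)
    (hf : ∀ p, f p = ∑ r, ∑ s, ∑ i, ∑ j, pinv p.1 s r * p.2 i s * p.2 j r * K i j) :
    Convex ℝ D ∧ ConvexOn ℝ D f := by
  have hKsym : Kᵀ = K := by
    rw [← conjTranspose_eq_transpose_of_trivial]; exact hK.1
  -- convexity of the domain
  have hDconv : Convex ℝ D := by
    subst hD
    rintro ⟨Θ₁, β₁⟩ ⟨h1p, h1r⟩ ⟨Θ₂, β₂⟩ ⟨h2p, h2r⟩ a b ha hb hab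
    set Θ : Matrix (Fin T) (Fin T) ℝ := a • Θ₁ + b • Θ₂ with hΘdef
    have hΘpsd : Θ.PosSemidef := (psd_smul' h1p ha).add (psd_smul' h2p hb)
    refine ⟨hΘpsd, fun i => ?_⟩
    have hrow : (fun s => (a • (Θ₁, β₁) + b • (Θ₂, β₂)).2 i s)
        = a • (fun s => β₁ i s) + b • (fun s => β₂ i s) := by
      funext s
      simp [Matrix.add_apply, Matrix.smul_apply, smul_eq_mul]
    rw [hrow]
    have hadd : ∀ u v : Fin T → ℝ, u ∈ Set.range Θ.mulVec → v ∈ Set.range Θ.mulVec →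
        u + v ∈ Set.range Θ.mulVec := by
      rintro u v ⟨zu, hzu⟩ ⟨zv, hzv⟩
      exact ⟨zu + zv, by rw [Matrix.mulVec_add, hzu, hzv]⟩
    obtain ⟨hc1, hc2, hc3, hc4⟩ := hpinv Θ
    have hmem1 : a • (fun s => β₁ i s) ∈ Set.range Θ.mulVec := by
      rcases ha.eq_or_lt with h | h
      · exact ⟨0, by simp [← h, Matrix.mulVec_zero]⟩
      · obtain ⟨z, hz⟩ := range_lemma h1p h2p h hb hΘdef hc1 hc3 (h1r i)
        exact ⟨a • z, by rw [Matrix.mulVec_smul, hz]⟩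
    have hmem2 : b • (fun s => β₂ i s) ∈ Set.range Θ.mulVec := by
      rcases hb.eq_or_lt with h | h
      · exact ⟨0, by simp [← h, Matrix.mulVec_zero]⟩
      · have hΘ' : Θ = b • Θ₂ + a • Θ₁ := by rw [hΘdef, add_comm]
        obtain ⟨z, hz⟩ := range_lemma h2p h1p h ha hΘ' hc1 hc3 (h2r i)
        exact ⟨b • z, by rw [Matrix.mulVec_smul, hz]⟩
    exact hadd _ _ hmem1 hmem2
  refine ⟨hDconv, hDconv, ?_⟩
  rintro ⟨Θ₁, β₁⟩ hp ⟨Θ₂, β₂⟩ hq a b ha hb hab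
  obtain ⟨h1p, h1r⟩ : Θ₁.PosSemidef ∧ ∀ i : Fin n, (fun s => β₁ i s) ∈ Set.range Θ₁.mulVec := by
    rw [hD] at hp; exact hp
  obtain ⟨h2p, h2r⟩ : Θ₂.PosSemidef ∧ ∀ i : Fin n, (fun s => β₂ i s) ∈ Set.range Θ₂.mulVec := by
    rw [hD] at hq; exact hq
  have hmem := hDconv hp hq ha hb hab
  rw [hD] at hmem
  obtain ⟨hcp, hcr⟩ := hmem
  set Θ : Matrix (Fin T) (Fin T) ℝ := a • Θ₁ + b • Θ₂ with hΘdef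
  set β : Matrix (Fin n) (Fin T) ℝ := a • β₁ + b • β₂ with hβdef
  have hcomp1 : (a • (Θ₁, β₁) + b • (Θ₂, β₂) : _ × _).1 = Θ := rfl
  have hcomp2 : (a • (Θ₁, β₁) + b • (Θ₂, β₂) : _ × _).2 = β := rfl
  -- symmetry facts
  have hΘsym : Θᵀ = Θ := by
    rw [← conjTranspose_eq_transpose_of_trivial]; exact hcp.1
  have h1sym : Θ₁ᵀ = Θ₁ := by
    rw [← conjTranspose_eq_transpose_of_trivial]; exact h1p.1
  have h2sym : Θ₂ᵀ = Θ₂ := by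
    rw [← conjTranspose_eq_transpose_of_trivial]; exact h2p.1
  set P : Matrix (Fin T) (Fin T) ℝ := pinv Θ with hPdef
  set P₁ : Matrix (Fin T) (Fin T) ℝ := pinv Θ₁ with hP1def
  set P₂ : Matrix (Fin T) (Fin T) ℝ := pinv Θ₂ with hP2def
  obtain ⟨hpen1, hpen2, hpen3, hpen4⟩ := hpinv Θ
  obtain ⟨h1pen1, h1pen2, h1pen3, h1pen4⟩ := hpinv Θ₁
  obtain ⟨h2pen1, h2pen2, h2pen3, h2pen4⟩ := hpinv Θ₂
  -- penrose consequences
  have e2 : Θ * Pᵀ = P * Θ := by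
    rw [← hpen4, Matrix.transpose_mul, hΘsym]
  have e2' : ∀ {k : ℕ} (X : Matrix (Fin T) (Fin k) ℝ), Θ * (Pᵀ * X) = P * (Θ * X) := by
    intro k X; rw [← Matrix.mul_assoc, e2, Matrix.mul_assoc]
  have e3 : P * (Θ * Θ) = Θ := by
    have h := congrArg Matrix.transpose hpen1
    simp only [Matrix.transpose_mul, hΘsym] at h
    -- h : Θ * (Pᵀ * Θ) = Θ  (hopefully)
    rw [e2' Θ] at h
    rw [← Matrix.mul_assoc] at h ⊢
    exact h
  have e3' : ∀ {k : ℕ} (X : Matrix (Fin T) (Fin k) ℝ), P * (Θ * (Θ * X)) = Θ * X := by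
    intro k X
    calc P * (Θ * (Θ * X)) = P * (Θ * Θ) * X := by simp only [Matrix.mul_assoc]
    _ = Θ * X := by rw [e3]
  -- collapse lemma for each pos semidef matrix with its pinv
  have collapse : ∀ (Θ' P' : Matrix (Fin T) (Fin T) ℝ), Θ' * P' * Θ' = Θ' →
      ∀ {k : ℕ} (X : Matrix (Fin T) (Fin k) ℝ), Θ' * (P' * (Θ' * X)) = Θ' * X := by
    intro Θ' P' hpe k X
    calc Θ' * (P' * (Θ' * X)) = Θ' * P' * Θ' * X := by simp only [Matrix.mul_assoc]
    _ = Θ' * X := by rw [hpe]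
  -- choose Z matrices
  have hZ : ∀ (Θ' : Matrix (Fin T) (Fin T) ℝ) (β' : Matrix (Fin n) (Fin T) ℝ),
      Θ'ᵀ = Θ' → (∀ i : Fin n, (fun s => β' i s) ∈ Set.range Θ'.mulVec) →
      ∃ Z : Matrix (Fin n) (Fin T) ℝ, β' = Z * Θ' := by
    intro Θ' β' hsym hr
    refine ⟨Matrix.of (fun i => (hr i).choose), ?_⟩
    ext i s
    have := (hr i).choose_spec
    have hthis := congrFun this s
    simp only [Matrix.mulVec, dotProduct] at hthis
    simp only [Matrix.mul_apply, Matrix.of_apply]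
    rw [← hthis]
    refine Finset.sum_congr rfl fun t _ => ?_
    have hst : Θ' t s = Θ' s t := congrFun (congrFun hsym s) t
    rw [hst]; ring
  obtain ⟨Z, hZc⟩ := hZ Θ β hΘsym hcr
  obtain ⟨Z₁, hZ1⟩ := hZ Θ₁ β₁ h1sym h1r
  obtain ⟨Z₂, hZ2⟩ := hZ Θ₂ β₂ h2sym h2r
  -- the test matrix W = β * Pᵀ
  set W : Matrix (Fin n) (Fin T) ℝ := β * Pᵀ with hWdef
  have hWT : Wᵀ = P * βᵀ := by
    rw [hWdef, Matrix.transpose_mul, Matrix.transpose_transpose]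
  -- f in trace form
  have ftr : ∀ p, f p = trace (K * (p.2 * (pinv p.1 * p.2ᵀ))) := fun p =>
    (hf p).trans (sum_eq_trace _ _ _ hKsym)
  -- identity I : β' * (P' * β'ᵀ) = Z' * (Θ' * Z'ᵀ)
  have idI : ∀ (Θ' P' : Matrix (Fin T) (Fin T) ℝ) (β' Z' : Matrix (Fin n) (Fin T) ℝ),
      Θ'ᵀ = Θ' → Θ' * P' * Θ' = Θ' → β' = Z' * Θ' →
      β' * (P' * β'ᵀ) = Z' * (Θ' * Z'ᵀ) := by
    intro Θ' P' β' Z' hsym hpe hbz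
    rw [hbz, Matrix.transpose_mul, hsym]
    calc Z' * Θ' * (P' * (Θ' * Z'ᵀ)) = Z' * (Θ' * (P' * (Θ' * Z'ᵀ))) := by
          simp only [Matrix.mul_assoc]
    _ = Z' * (Θ' * Z'ᵀ) := by rw [collapse Θ' P' hpe]
  -- claim B pieces
  have hβWT : β * Wᵀ = β * (P * βᵀ) := by rw [hWT]
  have hWΘW : W * (Θ * Wᵀ) = β * (P * βᵀ) := by
    have step : β * Pᵀ = Z * (P * Θ) := by
      rw [hZc, Matrix.mul_assoc, e2]
    rw [hWT, hWdef, step]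
    calc Z * (P * Θ) * (Θ * (P * βᵀ)) = Z * (P * (Θ * (Θ * (P * βᵀ)))) := by
          simp only [Matrix.mul_assoc]
    _ = Z * (Θ * (P * βᵀ)) := by rw [e3']
    _ = β * (P * βᵀ) := by rw [hZc, Matrix.mul_assoc]
  -- claim A for each k
  have claimA : ∀ (Θ' P' : Matrix (Fin T) (Fin T) ℝ) (β' Z' : Matrix (Fin n) (Fin T) ℝ),
      Θ'.PosSemidef → Θ'ᵀ = Θ' → Θ' * P' * Θ' = Θ' → β' = Z' * Θ' →
      trace (K * (β' * (P' * β'ᵀ))) - 2 * trace (K * (β' * Wᵀ))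
        + trace (K * (W * (Θ' * Wᵀ))) ≥ 0 := by
    intro Θ' P' β' Z' hpsd hsym hpe hbz
    have hq1 : β' * (P' * β'ᵀ) = Z' * (Θ' * Z'ᵀ) := idI Θ' P' β' Z' hsym hpe hbz
    have hq2 : β' * Wᵀ = Z' * (Θ' * Wᵀ) := by rw [hbz, Matrix.mul_assoc]
    have hcross : trace (K * (W * (Θ' * Z'ᵀ))) = trace (K * (Z' * (Θ' * Wᵀ))) :=
      trace_cross hKsym hsym W Z'
    have hexp : trace (K * ((Z' - W) * (Θ' * (Z' - W)ᵀ)))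
        = trace (K * (Z' * (Θ' * Z'ᵀ))) - trace (K * (Z' * (Θ' * Wᵀ)))
          - trace (K * (W * (Θ' * Z'ᵀ))) + trace (K * (W * (Θ' * Wᵀ))) := by
      have : (Z' - W) * (Θ' * (Z' - W)ᵀ)
          = Z' * (Θ' * Z'ᵀ) - Z' * (Θ' * Wᵀ) - W * (Θ' * Z'ᵀ) + W * (Θ' * Wᵀ) := by
        rw [Matrix.transpose_sub]
        rw [Matrix.mul_sub, Matrix.sub_mul, Matrix.mul_sub, Matrix.mul_sub]
        abel
      rw [this]
      simp only [Matrix.mul_sub, Matrix.mul_add, trace_sub, trace_add]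
    have hnn : 0 ≤ trace (K * ((Z' - W) * (Θ' * (Z' - W)ᵀ))) :=
      trace_psd_nonneg hK hpsd (Z' - W)
    rw [hcross] at hexp
    rw [hq1, hq2]
    rw [hexp] at hnn
    linarith [hnn]
  -- linearity
  have hlinβ : trace (K * (β * Wᵀ))
      = a * trace (K * (β₁ * Wᵀ)) + b * trace (K * (β₂ * Wᵀ)) := by
    rw [hβdef]
    simp only [Matrix.add_mul, Matrix.smul_mul, Matrix.mul_add, Matrix.mul_smul,
      trace_add, trace_smul, smul_eq_mul]
  have hlinΘ : trace (K * (W * (Θ * Wᵀ)))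
      = a * trace (K * (W * (Θ₁ * Wᵀ))) + b * trace (K * (W * (Θ₂ * Wᵀ))) := by
    rw [hΘdef]
    simp only [Matrix.add_mul, Matrix.smul_mul, Matrix.mul_add, Matrix.mul_smul,
      trace_add, trace_smul, smul_eq_mul]
  -- assemble
  have hfc : f (a • (Θ₁, β₁) + b • (Θ₂, β₂)) = trace (K * (β * (P * βᵀ))) := by
    rw [ftr, hcomp1, hcomp2, hPdef]
  have hf1 : f (Θ₁, β₁) = trace (K * (β₁ * (P₁ * β₁ᵀ))) := by rw [ftr]
  have hf2 : f (Θ₂, β₂) = trace (K * (β₂ * (P₂ * β₂ᵀ))) := by rw [ftr]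
  have hA1 := claimA Θ₁ P₁ β₁ Z₁ h1p h1sym h1pen1 hZ1
  have hA2 := claimA Θ₂ P₂ β₂ Z₂ h2p h2sym h2pen1 hZ2
  have key : trace (K * (β * (P * βᵀ)))
      = 2 * trace (K * (β * Wᵀ)) - trace (K * (W * (Θ * Wᵀ))) := by
    rw [hβWT, hWΘW]; ring
  have goal' : f (a • (Θ₁, β₁) + b • (Θ₂, β₂)) ≤ a * f (Θ₁, β₁) + b * f (Θ₂, β₂) := by
    rw [hfc, hf1, hf2, key, hlinβ, hlinΘ]
    nlinarith [hA1, hA2, ha, hb]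
  simpa [smul_eq_mul] using goal'
end

section
/- The function g: S^T_+ × ℝ^T → ℝ ∪ {+∞} defined by g(A, x) = ⟨x, A† x⟩ if x ∈ range(A) and g(A, x) = +∞ otherwise, is jointly convex on S^T_+ × ℝ^T. -/
open Matrix

section Aux

variable {T : ℕ}

lemma psd_dot {A : Matrix (Fin T) (Fin T) ℝ} (hA : A.PosSemidef) (x : Fin T → ℝ) :
    0 ≤ x ⬝ᵥ A *ᵥ x := by simpa using hA.dotProduct_mulVec_nonneg x

lemma psd_sym {A : Matrix (Fin T) (Fin T) ℝ} (hA : A.PosSemidef) : Aᵀ = A := by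
  have := hA.1
  simpa [Matrix.IsHermitian, conjTranspose_eq_transpose_of_trivial] using this

lemma psd_zero {A : Matrix (Fin T) (Fin T) ℝ} (hA : A.PosSemidef) {x : Fin T → ℝ}
    (h : x ⬝ᵥ A *ᵥ x = 0) : A *ᵥ x = 0 := by
  have := (hA.dotProduct_mulVec_zero_iff x).mp (by simpa using h)
  exact this

lemma flip_dot {A : Matrix (Fin T) (Fin T) ℝ} (hA : Aᵀ = A) (x y : Fin T → ℝ) :
    x ⬝ᵥ A *ᵥ y = y ⬝ᵥ A *ᵥ x := by
  rw [dotProduct_mulVec, ← mulVec_transpose, hA, dotProduct_comm]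

lemma sup_bound {A : Matrix (Fin T) (Fin T) ℝ} (hA : A.PosSemidef) (u z : Fin T → ℝ) :
    2 * (z ⬝ᵥ A *ᵥ u) - z ⬝ᵥ A *ᵥ z ≤ u ⬝ᵥ A *ᵥ u := by
  have h := psd_dot hA (u - z)
  have hflip := flip_dot (psd_sym hA) u z
  rw [mulVec_sub, dotProduct_sub, sub_dotProduct, sub_dotProduct] at h
  linarith

end Aux

theorem joint_convexity_pseudoinverse_quadratic (T : ℕ)
    (pinv : Matrix (Fin T) (Fin T) ℝ → Matrix (Fin T) (Fin T) ℝ)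
    (hpinv : ∀ A : Matrix (Fin T) (Fin T) ℝ,
      A * pinv A * A = A ∧ pinv A * A * pinv A = pinv A ∧
      (A * pinv A)ᵀ = A * pinv A ∧ (pinv A * A)ᵀ = pinv A * A)
    (D : Set (Matrix (Fin T) (Fin T) ℝ × (Fin T → ℝ)))
    (hD : D = {p | p.1.PosSemidef ∧ p.2 ∈ Set.range p.1.mulVec})
    (g : Matrix (Fin T) (Fin T) ℝ × (Fin T → ℝ) → ℝ)
    (hg : ∀ p, g p = p.2 ⬝ᵥ (pinv p.1).mulVec p.2) :
    Convex ℝ D ∧ ConvexOn ℝ D g := by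
  subst hD
  -- value of g on range elements
  have gval : ∀ (A : Matrix (Fin T) (Fin T) ℝ) (u : Fin T → ℝ), A.PosSemidef →
      (A *ᵥ u) ⬝ᵥ (pinv A) *ᵥ (A *ᵥ u) = u ⬝ᵥ A *ᵥ u := by
    intro A u hA
    have helper : ∀ N : Matrix (Fin T) (Fin T) ℝ,
        (A *ᵥ u) ⬝ᵥ (N *ᵥ u) = u ⬝ᵥ (Aᵀ * N) *ᵥ u := by
      intro N
      rw [← mulVec_mulVec]
      conv_rhs => rw [dotProduct_mulVec, vecMul_transpose]
    rw [mulVec_mulVec, helper, psd_sym hA, ← Matrix.mul_assoc, (hpinv A).1]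
  have key : ∀ A x, (A.PosSemidef ∧ x ∈ Set.range A.mulVec) →
      ∀ B y, (B.PosSemidef ∧ y ∈ Set.range B.mulVec) →
      ∀ a b : ℝ, 0 ≤ a → 0 ≤ b → a + b = 1 →
      ((a • A + b • B).PosSemidef ∧ (a • x + b • y) ∈ Set.range (a • A + b • B).mulVec)
        ∧ (a • x + b • y) ⬝ᵥ (pinv (a • A + b • B)) *ᵥ (a • x + b • y)
            ≤ a * (x ⬝ᵥ (pinv A) *ᵥ x) + b * (y ⬝ᵥ (pinv B) *ᵥ y) := by
    rintro A x ⟨hA, u, hu⟩ B y ⟨hB, v, hv⟩ a b ha hb hab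
    set C : Matrix (Fin T) (Fin T) ℝ := a • A + b • B with hCdef
    have hCsym : Cᵀ = C := by
      simp [hCdef, Matrix.transpose_add, Matrix.transpose_smul, psd_sym hA, psd_sym hB]
    have hCquad : ∀ z : Fin T → ℝ, z ⬝ᵥ C *ᵥ z = a * (z ⬝ᵥ A *ᵥ z) + b * (z ⬝ᵥ B *ᵥ z) := by
      intro z
      simp [hCdef, add_mulVec, smul_mulVec, dotProduct_add, dotProduct_smul,
        smul_eq_mul]
    have hC : C.PosSemidef := by
      refine PosSemidef.of_dotProduct_mulVec_nonneg ?_ (fun z => ?_)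
      · show Cᴴ = C
        simpa [conjTranspose_eq_transpose_of_trivial] using hCsym
      · simp only [star_trivial]
        rw [hCquad]
        have := psd_dot hA z; have := psd_dot hB z
        positivity
    set w : Fin T → ℝ := a • x + b • y with hwdef
    -- projection Q := C * pinv C fixes range A (if a > 0) and range B (if b > 0)
    have hproj : ∀ M : Matrix (Fin T) (Fin T) ℝ, M.PosSemidef → ∀ c : ℝ, 0 < c →
        (∀ z, c * (z ⬝ᵥ M *ᵥ z) ≤ z ⬝ᵥ C *ᵥ z) →
        ∀ r, (C * pinv C) *ᵥ (M *ᵥ r) = M *ᵥ r := by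
      intro M hM c hc hle r
      -- show M * (1 - C * pinv C) = 0
      have hCN : C * (1 - C * pinv C) = 0 := by
        have h1 : (1 - C * pinv C) * C = 0 := by
          rw [sub_mul, one_mul, Matrix.mul_assoc, ← Matrix.mul_assoc, (hpinv C).1, sub_self]
        have := congrArg Matrix.transpose h1
        simpa [Matrix.transpose_mul, Matrix.transpose_sub, hCsym, (hpinv C).2.2.1] using this
      have hMN : ∀ s : Fin T → ℝ, M *ᵥ ((1 - C * pinv C) *ᵥ s) = 0 := by
        intro s
        set t := (1 - C * pinv C) *ᵥ s with ht
        have htC : t ⬝ᵥ C *ᵥ t = 0 := by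
          have : C *ᵥ t = 0 := by
            rw [ht, mulVec_mulVec, hCN, zero_mulVec]
          rw [this, dotProduct_zero]
        have h1 : c * (t ⬝ᵥ M *ᵥ t) ≤ 0 := by rw [← htC]; exact hle t
        have h2 : 0 ≤ t ⬝ᵥ M *ᵥ t := psd_dot hM t
        have h3 : t ⬝ᵥ M *ᵥ t = 0 := le_antisymm (by nlinarith) h2
        exact psd_zero hM h3
      -- hence M = M * (C * pinv C), transpose to get (C * pinv C) * M = M
      have hMmat : M * (1 - C * pinv C) = 0 := by
        ext i j
        have := congrFun (hMN (Pi.single j 1)) i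
        simpa [mulVec_mulVec, mulVec_single, Matrix.mul_apply, mulVec, dotProduct,
          Pi.single_apply, Finset.sum_ite_eq'] using this
      have hQM : (C * pinv C) * M = M := by
        have := congrArg Matrix.transpose hMmat
        rw [Matrix.transpose_mul, Matrix.transpose_sub, Matrix.transpose_one,
          (hpinv C).2.2.1, psd_sym hM] at this
        simp only [Matrix.transpose_zero] at this
        have h4 : M - (C * pinv C) * M = 0 := by
          calc M - (C * pinv C) * M = (1 - C * pinv C) * M := by rw [sub_mul, one_mul]
          _ = 0 := this
        exact (sub_eq_zero.mp h4).symm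
      calc (C * pinv C) *ᵥ (M *ᵥ r) = ((C * pinv C) * M) *ᵥ r := by rw [mulVec_mulVec]
        _ = M *ᵥ r := by rw [hQM]
    have hQw : (C * pinv C) *ᵥ w = w := by
      have hQx : a • ((C * pinv C) *ᵥ x) = a • x := by
        rcases eq_or_lt_of_le ha with h | h
        · simp [← h]
        · congr 1
          rw [← hu]
          refine hproj A hA a h (fun z => ?_) u
          rw [hCquad z]
          have := psd_dot hB z
          nlinarith
      have hQy : b • ((C * pinv C) *ᵥ y) = b • y := by
        rcases eq_or_lt_of_le hb with h | h
        · simp [← h]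
        · congr 1
          rw [← hv]
          refine hproj B hB b h (fun z => ?_) v
          rw [hCquad z]
          have := psd_dot hA z
          nlinarith
      rw [hwdef, mulVec_add, mulVec_smul, mulVec_smul, hQx, hQy]
    have hQw2 : C *ᵥ ((pinv C) *ᵥ w) = w := by rw [mulVec_mulVec]; exact hQw
    have hwrange : w ∈ Set.range C.mulVec := ⟨(pinv C) *ᵥ w, hQw2⟩
    refine ⟨⟨hC, hwrange⟩, ?_⟩
    set z : Fin T → ℝ := (pinv C) *ᵥ w with hz
    have hCz : C *ᵥ z = w := hQw2
    have hgCw : w ⬝ᵥ (pinv C) *ᵥ w = z ⬝ᵥ w := by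
      rw [hz, dotProduct_comm]
    have hzCz : z ⬝ᵥ C *ᵥ z = z ⬝ᵥ w := by rw [hCz]
    have hgA : x ⬝ᵥ (pinv A) *ᵥ x = u ⬝ᵥ A *ᵥ u := by rw [← hu]; exact gval A u hA
    have hgB : y ⬝ᵥ (pinv B) *ᵥ y = v ⬝ᵥ B *ᵥ v := by rw [← hv]; exact gval B v hB
    have hbound : w ⬝ᵥ (pinv C) *ᵥ w = 2 * (z ⬝ᵥ w) - z ⬝ᵥ C *ᵥ z := by
      rw [hgCw, hzCz]; ring
    have hzw : z ⬝ᵥ w = a * (z ⬝ᵥ A *ᵥ u) + b * (z ⬝ᵥ B *ᵥ v) := by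
      rw [hwdef, ← hu, ← hv]
      simp [dotProduct_add, dotProduct_smul, smul_eq_mul]
    have h1 : 2 * (z ⬝ᵥ A *ᵥ u) - z ⬝ᵥ A *ᵥ z ≤ u ⬝ᵥ A *ᵥ u := sup_bound hA u z
    have h2 : 2 * (z ⬝ᵥ B *ᵥ v) - z ⬝ᵥ B *ᵥ z ≤ v ⬝ᵥ B *ᵥ v := sup_bound hB v z
    rw [hbound, hzw, hCquad z, hgA, hgB]
    nlinarith
  constructor
  · rintro ⟨A, x⟩ hp ⟨B, y⟩ hq a b ha hb hab
    exact (key A x hp B y hq a b ha hb hab).1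
  · refine ⟨?_, ?_⟩
    · rintro ⟨A, x⟩ hp ⟨B, y⟩ hq a b ha hb hab
      exact (key A x hp B y hq a b ha hb hab).1
    · rintro ⟨A, x⟩ hp ⟨B, y⟩ hq a b ha hb hab
      have := (key A x hp B y hq a b ha hb hab).2
      simpa [hg, smul_eq_mul] using this
end

section
/- The function φ*(y) = y·arcsinh(y) − √(1+y²) + 1 satisfies φ*(y)/ (y²/2) → 1 as y → 0, and φ*(y) − (|y|(log(2|y|) − 1) + 1) → 0 as |y| → ∞. -/
open Real Filter


lemma sqrt_one_add_sq_pos (y : ℝ) : 0 < Real.sqrt (1 + y ^ 2) := by positivity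

lemma hasDerivAt_sqrt_one_add_sq (y : ℝ) :
    HasDerivAt (fun y : ℝ => Real.sqrt (1 + y ^ 2)) (y / Real.sqrt (1 + y ^ 2)) y := by
  have h1 : HasDerivAt (fun y : ℝ => 1 + y ^ 2) (2 * y) y := by
    simpa using (hasDerivAt_pow 2 y).const_add 1
  have h2 := (Real.hasDerivAt_sqrt (by positivity : (1:ℝ) + y ^ 2 ≠ 0)).comp y h1
  refine h2.congr_deriv ?_
  field_simp

lemma hasDerivAt_f (y : ℝ) :
    HasDerivAt (fun y : ℝ => y * arsinh y - Real.sqrt (1 + y ^ 2) + 1) (arsinh y) y := by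
  have h1 : HasDerivAt (fun y : ℝ => y * arsinh y)
      (1 * arsinh y + y * (Real.sqrt (1 + y ^ 2))⁻¹) y :=
    (hasDerivAt_id y).mul (Real.hasDerivAt_arsinh y)
  have h2 := ((h1.sub (hasDerivAt_sqrt_one_add_sq y)).add_const 1)
  refine h2.congr_deriv ?_
  have := (sqrt_one_add_sq_pos y).ne'
  ring

lemma part1' :
    Tendsto (fun y : ℝ => (y * arsinh y - Real.sqrt (1 + y ^ 2) + 1) / (y ^ 2 / 2))
      (nhdsWithin 0 {0}ᶜ) (nhds 1) := by
  have hg : ∀ y : ℝ, HasDerivAt (fun y : ℝ => y ^ 2 / 2) y y := by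
    intro y
    have := (hasDerivAt_pow 2 y).div_const 2
    simpa using this
  have hdiv : Tendsto (fun y : ℝ => arsinh y / y) (nhdsWithin 0 {0}ᶜ) (nhds 1) := by
    have h := Real.hasDerivAt_arsinh 0
    simp only [ne_eq, OfNat.ofNat_ne_zero, not_false_eq_true, zero_pow, add_zero,
      Real.sqrt_one, inv_one] at h
    have := hasDerivAt_iff_tendsto_slope.mp h
    refine this.congr (fun y => ?_)
    simp [slope_def_field, Real.arsinh_zero, div_eq_inv_mul]
  refine HasDerivAt.lhopital_zero_nhdsNE (Eventually.of_forall fun y => hasDerivAt_f y)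
    (Eventually.of_forall fun y => hg y) ?_ ?_ ?_ hdiv
  · exact eventually_mem_nhdsWithin.mono fun y hy => hy
  · have : Tendsto (fun y : ℝ => y * arsinh y - Real.sqrt (1 + y ^ 2) + 1) (nhds 0) (nhds 0) := by
      have := (hasDerivAt_f 0).continuousAt.tendsto
      simpa using this
    exact this.mono_left nhdsWithin_le_nhds
  · have : Tendsto (fun y : ℝ => y ^ 2 / 2) (nhds 0) (nhds 0) := by
      have := (hg 0).continuousAt.tendsto
      simpa using this
    exact this.mono_left nhdsWithin_le_nhds


lemma abs_lt_sqrt_one_add_sq (y : ℝ) : |y| < Real.sqrt (1 + y ^ 2) := by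
  rw [← Real.sqrt_sq_eq_abs]
  exact Real.sqrt_lt_sqrt (sq_nonneg y) (by linarith)

lemma sqrt_sub_eq_inv (y : ℝ) :
    Real.sqrt (1 + y ^ 2) - y = (Real.sqrt (1 + y ^ 2) + y)⁻¹ := by
  have h : (Real.sqrt (1 + y ^ 2) - y) * (Real.sqrt (1 + y ^ 2) + y) = 1 := by
    have := Real.sq_sqrt (by positivity : (0:ℝ) ≤ 1 + y ^ 2)
    nlinarith [this]
  exact eq_inv_of_mul_eq_one_left h

lemma sqrtsum_top : Tendsto (fun y : ℝ => Real.sqrt (1 + y ^ 2) + y) atTop atTop :=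
  tendsto_atTop_mono (fun y => le_add_of_nonneg_left (Real.sqrt_nonneg _)) tendsto_id

lemma part2top :
    Tendsto (fun y : ℝ =>
        (y * arsinh y - Real.sqrt (1 + y ^ 2) + 1) - (|y| * (Real.log (2 * |y|) - 1) + 1))
      atTop (nhds 0) := by
  have hinv : Tendsto (fun y : ℝ => (Real.sqrt (1 + y ^ 2) + y)⁻¹) atTop (nhds 0) :=
    sqrtsum_top.inv_tendsto_atTop
  have heq : ∀ᶠ y in atTop,
      (y * arsinh y - Real.sqrt (1 + y ^ 2) + 1) - (|y| * (Real.log (2 * |y|) - 1) + 1)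
      = y * Real.log ((y + Real.sqrt (1 + y ^ 2)) / (2 * y))
        - (Real.sqrt (1 + y ^ 2) - y) := by
    filter_upwards [eventually_gt_atTop (0:ℝ)] with y hy
    have hs := (abs_lt_sqrt_one_add_sq y).trans_le' (le_abs_self y)
    rw [abs_of_pos hy, Real.arsinh,
      Real.log_div (by positivity) (by positivity)]
    ring
  rw [show (0:ℝ) = 0 - 0 by ring]
  refine Tendsto.congr' (heq.mono fun y h => h.symm) (Tendsto.sub ?_ ?_)
  · -- y * log ((y + √(1+y²))/(2y)) → 0
    apply squeeze_zero' (g := fun y : ℝ => (Real.sqrt (1 + y ^ 2) + y)⁻¹ / 2)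
    · filter_upwards [eventually_gt_atTop (0:ℝ)] with y hy
      have hs := (abs_lt_sqrt_one_add_sq y).trans_le' (le_abs_self y)
      have h1 : (1:ℝ) ≤ (y + Real.sqrt (1 + y ^ 2)) / (2 * y) := by
        rw [le_div_iff₀ (by positivity)]
        linarith
      exact mul_nonneg hy.le (Real.log_nonneg h1)
    · filter_upwards [eventually_gt_atTop (0:ℝ)] with y hy
      have hs := (abs_lt_sqrt_one_add_sq y).trans_le' (le_abs_self y)
      have hlog : Real.log ((y + Real.sqrt (1 + y ^ 2)) / (2 * y))
          ≤ (y + Real.sqrt (1 + y ^ 2)) / (2 * y) - 1 :=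
        Real.log_le_sub_one_of_pos (by positivity)
      have h2 : y * ((y + Real.sqrt (1 + y ^ 2)) / (2 * y) - 1)
          = (Real.sqrt (1 + y ^ 2) + y)⁻¹ / 2 := by
        rw [← sqrt_sub_eq_inv]
        field_simp
        ring
      calc y * Real.log ((y + Real.sqrt (1 + y ^ 2)) / (2 * y))
          ≤ y * ((y + Real.sqrt (1 + y ^ 2)) / (2 * y) - 1) :=
            mul_le_mul_of_nonneg_left hlog hy.le
        _ = _ := h2
    · simpa using hinv.div_const 2
  · -- √(1+y²) - y → 0
    refine Tendsto.congr (fun y => (sqrt_sub_eq_inv y).symm) hinv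

lemma part2 :
    Tendsto (fun y : ℝ =>
        (y * arsinh y - Real.sqrt (1 + y ^ 2) + 1) - (|y| * (Real.log (2 * |y|) - 1) + 1))
      (cocompact ℝ) (nhds 0) := by
  rw [cocompact_eq_atBot_atTop]
  refine Tendsto.sup ?_ part2top
  have := part2top.comp tendsto_neg_atBot_atTop
  refine this.congr fun y => ?_
  simp [Function.comp, Real.arsinh_neg, neg_sq, abs_neg]

theorem cosh_conjugate_asymptotics :
    Tendsto (fun y : ℝ => (y * arsinh y - Real.sqrt (1 + y ^ 2) + 1) / (y ^ 2 / 2))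
      (nhdsWithin 0 {0}ᶜ) (nhds 1) ∧
    Tendsto (fun y : ℝ =>
        (y * arsinh y - Real.sqrt (1 + y ^ 2) + 1) - (|y| * (Real.log (2 * |y|) - 1) + 1))
      (cocompact ℝ) (nhds 0) := by
  exact ⟨part1', part2⟩
end
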